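/- If t_1, …, t_{n−1} are nonnegative real numbers, then the matrix exponential exp(−Σ_{j=1}^{n−1} t_j · e^{(p)}_{(j,j)}) belongs to ⟨p⟩^+, i.e., it is entrywise nonnegative, its rows sum to 1, and it leaves p invariant under left multiplication by the row vector p. -/

import Mathlib

open Matrix

/-- The ratio `r_j := p_j / p_n` for `j ∈ [n-1]`, with the state space `[n]` modeled as
`Fin (m+1)`, the last state `n` as `Fin.last m`, and `[n-1]` as `Fin m` via `Fin.castSucc`. -/
noncomputable def r (m : ℕ) (p : Fin (m + 1) → ℝ) (j : Fin m) : ℝ :=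
  p j.castSucc / p (Fin.last m)

/-- `e^{(p)}_{(j,k)} := (e_j − r_j e_n)(e_k^T − e_n^T)` as an `(m+1) × (m+1)` real matrix. -/
noncomputable def Ep (m : ℕ) (p : Fin (m + 1) → ℝ) (j k : Fin m) :
    Matrix (Fin (m + 1)) (Fin (m + 1)) ℝ :=
  Matrix.vecMulVec
    (fun a => (if a = j.castSucc then (1 : ℝ) else 0) -
      r m p j * (if a = Fin.last m then (1 : ℝ) else 0))
    (fun b => (if b = k.castSucc then (1 : ℝ) else 0) - (if b = Fin.last m then (1 : ℝ) else 0))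

open NormedSpace

section Helpers

variable {N : Type*} [Fintype N] [DecidableEq N]

private theorem pow_entry_nonneg {M : Matrix N N ℝ} (h : ∀ a b, 0 ≤ M a b) :
    ∀ k a b, 0 ≤ (M ^ k) a b := by
  intro k
  induction k with
  | zero =>
    intro a b
    simp only [pow_zero, Matrix.one_apply]
    split <;> norm_num
  | succ k ih =>
    intro a b
    rw [pow_succ, Matrix.mul_apply]
    exact Finset.sum_nonneg fun c _ => mul_nonneg (ih a c) (h c b)

private theorem exp_entry_nonneg {M : Matrix N N ℝ} (h : ∀ a b, 0 ≤ M a b) (a b : N) :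
    0 ≤ exp M a b := by
  letI : SeminormedRing (Matrix N N ℝ) := Matrix.linftyOpSemiNormedRing
  letI : NormedRing (Matrix N N ℝ) := Matrix.linftyOpNormedRing
  letI : NormedAlgebra ℝ (Matrix N N ℝ) := Matrix.linftyOpNormedAlgebra
  let L : Matrix N N ℝ →ₗ[ℝ] ℝ :=
    { toFun := fun X => X a b
      map_add' := fun _ _ => rfl
      map_smul' := fun _ _ => rfl }
  have hsum := expSeries_summable' (𝕂 := ℝ) M
  have hmap := (LinearMap.toContinuousLinearMap L).map_tsum hsum
  simp only [LinearMap.coe_toContinuousLinearMap'] at hmap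
  have hL : exp M a b = L (∑' k, ((k.factorial : ℝ))⁻¹ • M ^ k) := by
    rw [exp_eq_tsum ℝ]
    rfl
  rw [hL, hmap]
  refine tsum_nonneg fun k => ?_
  have hk : L (((k.factorial : ℝ))⁻¹ • M ^ k) = ((k.factorial : ℝ))⁻¹ * (M ^ k) a b := rfl
  rw [hk]
  exact mul_nonneg (by positivity) (pow_entry_nonneg h k a b)

private theorem exp_mulVec_fixed {B : Matrix N N ℝ} {w : N → ℝ} (h : B *ᵥ w = 0) :
    exp B *ᵥ w = w := by
  letI : SeminormedRing (Matrix N N ℝ) := Matrix.linftyOpSemiNormedRing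
  letI : NormedRing (Matrix N N ℝ) := Matrix.linftyOpNormedRing
  letI : NormedAlgebra ℝ (Matrix N N ℝ) := Matrix.linftyOpNormedAlgebra
  let L : Matrix N N ℝ →ₗ[ℝ] (N → ℝ) :=
    { toFun := fun X => X *ᵥ w
      map_add' := fun X Y => Matrix.add_mulVec X Y w
      map_smul' := fun c X => Matrix.smul_mulVec c X w }
  have hsum := expSeries_summable' (𝕂 := ℝ) B
  have hmap := (LinearMap.toContinuousLinearMap L).map_tsum hsum
  simp only [LinearMap.coe_toContinuousLinearMap'] at hmap
  have h1 : exp B *ᵥ w = L (∑' k, ((k.factorial : ℝ))⁻¹ • B ^ k) := by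
    rw [exp_eq_tsum ℝ]
    rfl
  have hterm : ∀ k : ℕ,
      L (((k.factorial : ℝ))⁻¹ • B ^ k) = ((k.factorial : ℝ))⁻¹ • (B ^ k *ᵥ w) := fun k =>
    L.map_smul _ _
  rw [h1, hmap]
  rw [tsum_eq_single 0]
  · rw [hterm]; simp [Matrix.one_mulVec]
  · intro k hk
    obtain ⟨j, rfl⟩ := Nat.exists_eq_succ_of_ne_zero hk
    rw [hterm, pow_succ, ← Matrix.mulVec_mulVec, h, Matrix.mulVec_zero, smul_zero]

private theorem exp_vecMul_fixed {B : Matrix N N ℝ} {w : N → ℝ} (h : w ᵥ* B = 0) :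
    w ᵥ* exp B = w := by
  letI : SeminormedRing (Matrix N N ℝ) := Matrix.linftyOpSemiNormedRing
  letI : NormedRing (Matrix N N ℝ) := Matrix.linftyOpNormedRing
  letI : NormedAlgebra ℝ (Matrix N N ℝ) := Matrix.linftyOpNormedAlgebra
  let L : Matrix N N ℝ →ₗ[ℝ] (N → ℝ) :=
    { toFun := fun X => w ᵥ* X
      map_add' := fun X Y => Matrix.vecMul_add X Y w
      map_smul' := fun c X => by
        show w ᵥ* (c • X) = c • (w ᵥ* X)
        rw [← Matrix.mulVec_transpose, Matrix.transpose_smul, Matrix.smul_mulVec,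
          Matrix.mulVec_transpose] }
  have hsum := expSeries_summable' (𝕂 := ℝ) B
  have hmap := (LinearMap.toContinuousLinearMap L).map_tsum hsum
  simp only [LinearMap.coe_toContinuousLinearMap'] at hmap
  have h1 : w ᵥ* exp B = L (∑' k, ((k.factorial : ℝ))⁻¹ • B ^ k) := by
    rw [exp_eq_tsum ℝ]
    rfl
  have hterm : ∀ k : ℕ,
      L (((k.factorial : ℝ))⁻¹ • B ^ k) = ((k.factorial : ℝ))⁻¹ • (w ᵥ* B ^ k) := fun k =>
    L.map_smul _ _
  rw [h1, hmap]
  rw [tsum_eq_single 0]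
  · rw [hterm]; simp [Matrix.vecMul_one]
  · intro k hk
    obtain ⟨j, rfl⟩ := Nat.exists_eq_succ_of_ne_zero hk
    rw [hterm, pow_succ', ← Matrix.vecMul_vecMul, h, Matrix.zero_vecMul, smul_zero]

private theorem exp_smul_one_add (c : ℝ) (M : Matrix N N ℝ) :
    exp ((-c) • (1 : Matrix N N ℝ) + M) = Real.exp (-c) • exp M := by
  rw [Matrix.exp_add_of_commute _ _ ((Commute.one_left M).smul_left (-c))]
  have h1 : exp ((-c) • (1 : Matrix N N ℝ)) = Real.exp (-c) • (1 : Matrix N N ℝ) := by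
    rw [Matrix.smul_one_eq_diagonal, Matrix.exp_diagonal, Matrix.smul_one_eq_diagonal]
    have hfun : exp (fun _ : N => -c) = fun _ : N => Real.exp (-c) := by
      funext i
      rw [Pi.coe_exp]
      exact (congr_fun Real.exp_eq_exp_ℝ (-c)).symm
    rw [hfun]
  rw [h1, smul_mul_assoc, one_mul]

end Helpers

/-- if `t_j ≥ 0` for all `j`, then `exp(−Σ_j t_j e^{(p)}_{(j,j)}) ∈ ⟨p⟩⁺`:
it is entrywise nonnegative, its rows sum to `1`, and `p` is invariant under left
multiplication. -/
theorem stmt8 (m : ℕ) (hm : 1 ≤ m) (p : Fin (m + 1) → ℝ)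
    (hp : ∀ a, 0 < p a) (hsum : ∑ a, p a = 1) (t : Fin m → ℝ) (ht : ∀ j, 0 ≤ t j) :
    (∀ a b, 0 ≤ exp (-(∑ j, t j • Ep m p j j)) a b) ∧
    (exp (-(∑ j, t j • Ep m p j j))).mulVec (fun _ => (1 : ℝ)) = (fun _ => (1 : ℝ)) ∧
    Matrix.vecMul p (exp (-(∑ j, t j • Ep m p j j))) = p := by
  set A : Matrix (Fin (m + 1)) (Fin (m + 1)) ℝ := ∑ j, t j • Ep m p j j with hAdef
  have hplast : p (Fin.last m) ≠ 0 := (hp _).ne'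
  have hr : ∀ j, 0 ≤ r m p j := fun j => div_nonneg (hp _).le (hp _).le
  have hA_apply : ∀ a b, A a b = ∑ j, t j *
      (((if a = j.castSucc then (1 : ℝ) else 0) -
          r m p j * (if a = Fin.last m then 1 else 0)) *
        ((if b = j.castSucc then (1 : ℝ) else 0) - (if b = Fin.last m then 1 else 0))) := by
    intro a b
    simp [hAdef, Matrix.sum_apply, Ep, Matrix.vecMulVec_apply]
  have hA1 : A *ᵥ (fun _ => (1 : ℝ)) = 0 := by
    funext a
    simp only [Matrix.mulVec, dotProduct, mul_one, Pi.zero_apply]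
    rw [Finset.sum_congr rfl fun b _ => hA_apply a b, Finset.sum_comm]
    refine Finset.sum_eq_zero fun j _ => ?_
    rw [← Finset.mul_sum, ← Finset.mul_sum]
    have hz : ∑ b : Fin (m + 1),
        ((if b = j.castSucc then (1 : ℝ) else 0) - (if b = Fin.last m then 1 else 0)) = 0 := by
      rw [Finset.sum_sub_distrib]
      simp
    rw [hz, mul_zero, mul_zero]
  have hpA : p ᵥ* A = 0 := by
    funext b
    simp only [Matrix.vecMul, dotProduct, Pi.zero_apply]
    rw [Finset.sum_congr rfl fun a _ => by rw [hA_apply a b]]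
    simp only [Finset.mul_sum]
    rw [Finset.sum_comm]
    refine Finset.sum_eq_zero fun j _ => ?_
    have hrw : ∀ a : Fin (m + 1), p a * (t j *
        (((if a = j.castSucc then (1 : ℝ) else 0) -
            r m p j * (if a = Fin.last m then 1 else 0)) *
          ((if b = j.castSucc then (1 : ℝ) else 0) - (if b = Fin.last m then 1 else 0))))
        = (p a * ((if a = j.castSucc then (1 : ℝ) else 0) -
            r m p j * (if a = Fin.last m then 1 else 0))) *
          (t j * ((if b = j.castSucc then (1 : ℝ) else 0) -
            (if b = Fin.last m then 1 else 0))) := fun a => by ring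
    rw [Finset.sum_congr rfl fun a _ => hrw a, ← Finset.sum_mul]
    have hpu : ∑ a : Fin (m + 1), p a * ((if a = j.castSucc then (1 : ℝ) else 0) -
        r m p j * (if a = Fin.last m then 1 else 0)) = 0 := by
      simp only [mul_sub, Finset.sum_sub_distrib, mul_ite, mul_one, mul_zero,
        Finset.sum_ite_eq', Finset.mem_univ, if_true, mul_comm]
      rw [r]
      field_simp
      ring
    rw [hpu, zero_mul]
  set c : ℝ := ∑ j, t j * (1 + r m p j) with hc
  have htc : ∀ i, t i ≤ c := by
    intro i
    calc t i ≤ t i * (1 + r m p i) := le_mul_of_one_le_right (ht i) (by linarith [hr i])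
      _ ≤ c := Finset.single_le_sum (f := fun j => t j * (1 + r m p j))
          (fun j _ => mul_nonneg (ht j) (by linarith [hr j])) (Finset.mem_univ i)
  have htrc : ∑ j, t j * r m p j ≤ c :=
    Finset.sum_le_sum fun j _ => by nlinarith [hr j, ht j]
  have hM : ∀ a b, 0 ≤ (c • (1 : Matrix (Fin (m + 1)) (Fin (m + 1)) ℝ) + -A) a b := by
    intro a b
    simp only [Matrix.add_apply, Matrix.neg_apply, Matrix.smul_apply, Matrix.one_apply,
      smul_eq_mul]
    rw [hA_apply]
    induction a using Fin.lastCases with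
    | last =>
      have hsum' : ∑ j, t j *
          (((if Fin.last m = j.castSucc then (1 : ℝ) else 0) -
              r m p j * (if Fin.last m = Fin.last m then 1 else 0)) *
            ((if b = j.castSucc then (1 : ℝ) else 0) - (if b = Fin.last m then 1 else 0)))
          = ∑ j, t j * (-(r m p j) *
            ((if b = j.castSucc then (1 : ℝ) else 0) - (if b = Fin.last m then 1 else 0))) := by
        refine Finset.sum_congr rfl fun j _ => ?_
        rw [if_neg (Fin.castSucc_lt_last j).ne', if_pos rfl]
        ring_nf
      rw [hsum']
      induction b using Fin.lastCases with
      | last =>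
        have : ∑ j, t j * (-(r m p j) *
            ((if Fin.last m = j.castSucc then (1 : ℝ) else 0) -
              (if Fin.last m = Fin.last m then 1 else 0))) = ∑ j, t j * r m p j := by
          refine Finset.sum_congr rfl fun j _ => ?_
          rw [if_neg (Fin.castSucc_lt_last j).ne', if_pos rfl]
          ring
        rw [this]
        simp only [if_true, if_pos]
        linarith [htrc]
      | cast k =>
        have : ∑ j, t j * (-(r m p j) *
            ((if k.castSucc = j.castSucc then (1 : ℝ) else 0) -
              (if k.castSucc = Fin.last m then 1 else 0)))
            = -(t k * r m p k) := by
          rw [Finset.sum_eq_single k]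
          · rw [if_pos rfl, if_neg (Fin.castSucc_lt_last k).ne]
            ring
          · intro j _ hjk
            rw [if_neg (fun h => hjk (Fin.castSucc_inj.mp h).symm),
              if_neg (Fin.castSucc_lt_last k).ne]
            ring
          · intro h; exact absurd (Finset.mem_univ k) h
        rw [this]
        have h1 := mul_nonneg (ht k) (hr k)
        simp [(Fin.castSucc_lt_last k).ne']
        linarith
    | cast i =>
      have hsum' : ∑ j, t j *
          (((if i.castSucc = j.castSucc then (1 : ℝ) else 0) -
              r m p j * (if i.castSucc = Fin.last m then 1 else 0)) *
            ((if b = j.castSucc then (1 : ℝ) else 0) - (if b = Fin.last m then 1 else 0)))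
          = t i * ((if b = i.castSucc then (1 : ℝ) else 0) -
              (if b = Fin.last m then 1 else 0)) := by
        rw [Finset.sum_eq_single i]
        · rw [if_pos rfl, if_neg (Fin.castSucc_lt_last i).ne]
          ring
        · intro j _ hji
          rw [if_neg (fun h => hji (Fin.castSucc_inj.mp h).symm),
            if_neg (Fin.castSucc_lt_last i).ne]
          ring
        · intro h; exact absurd (Finset.mem_univ i) h
      rw [hsum']
      induction b using Fin.lastCases with
      | last =>
        simp [(Fin.castSucc_lt_last i).ne, (Fin.castSucc_lt_last i).ne']
        linarith [ht i]
      | cast k =>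
        by_cases hik : k = i
        · subst hik
          simp [(Fin.castSucc_lt_last k).ne]
          linarith [htc k]
        · simp [Fin.castSucc_inj, hik, Ne.symm hik, (Fin.castSucc_lt_last k).ne]
  have hdecomp : -A = (-c) • (1 : Matrix (Fin (m + 1)) (Fin (m + 1)) ℝ) +
      (c • (1 : Matrix (Fin (m + 1)) (Fin (m + 1)) ℝ) + -A) := by
    rw [← add_assoc, neg_smul, neg_add_cancel, zero_add]
  have hkey : exp (-A) = Real.exp (-c) •
      exp (c • (1 : Matrix (Fin (m + 1)) (Fin (m + 1)) ℝ) + -A) := by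
    conv_lhs => rw [hdecomp]
    exact exp_smul_one_add c _
  refine ⟨?_, ?_, ?_⟩
  · intro a b
    rw [hkey]
    simp only [Matrix.smul_apply, smul_eq_mul]
    exact mul_nonneg (Real.exp_nonneg _) (exp_entry_nonneg hM a b)
  · exact exp_mulVec_fixed (by rw [Matrix.neg_mulVec, hA1, neg_zero])
  · exact exp_vecMul_fixed (by rw [Matrix.vecMul_neg, hpA, neg_zero])
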